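/- arXiv:1512.07566 — 2 statements merged into one kernel-verified Lean document; each statement's English description precedes it below -/
import Mathlib

section
/- Let A be an N×N real symmetric positive definite matrix, I ⊆ {1,…,N}, and B = A restricted to I×I. Then the matrix C defined by C_{ij} = (A⁻¹)_{ij} − (B⁻¹)_{ij} for i,j ∈ I and C_{ij} = (A⁻¹)_{ij} otherwise, is positive semi-definite. -/
open Matrix

theorem stmt5 (N : ℕ) (A : Matrix (Fin N) (Fin N) ℝ) (hA : A.PosDef)
    (s : Finset (Fin N)) :
    Matrix.PosSemidef (Matrix.of fun i j : Fin N =>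
      if h : i ∈ s ∧ j ∈ s then
        A⁻¹ i j -
          (A.submatrix ((↑) : {a // a ∈ s} → Fin N) ((↑) : {a // a ∈ s} → Fin N))⁻¹
            ⟨i, h.1⟩ ⟨j, h.2⟩
      else A⁻¹ i j) := by
  classical
  set e : {a // a ∈ s} → Fin N := Subtype.val with he
  set B : Matrix {a // a ∈ s} {a // a ∈ s} ℝ := A.submatrix e e with hBdef
  set J : Matrix (Fin N) {a // a ∈ s} ℝ :=
    (1 : Matrix (Fin N) (Fin N) ℝ).submatrix id e with hJdef
  -- Jᵀ * A * J = B
  have hJAJ : Jᵀ * A * J = B := by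
    ext a b
    simp [hJdef, hBdef, Matrix.mul_apply, Matrix.one_apply, Finset.sum_ite_eq,
      Finset.sum_ite_eq']
  -- B is positive definite
  have hB : B.PosDef := by
    refine Matrix.PosDef.of_dotProduct_mulVec_pos (hA.1.submatrix e) fun x hx => ?_
    have hJx : J *ᵥ x ≠ 0 := by
      intro h
      apply hx
      funext a
      have := congrFun h (e a)
      simpa [hJdef, he, Matrix.mulVec, dotProduct, Matrix.one_apply,
        Subtype.val_injective.eq_iff, Finset.sum_ite_eq'] using this
    have := hA.dotProduct_mulVec_pos hJx
    have key : star x ⬝ᵥ B *ᵥ x = star (J *ᵥ x) ⬝ᵥ A *ᵥ (J *ᵥ x) := by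
      rw [← hJAJ]
      simp only [star_trivial, Matrix.dotProduct_mulVec, Matrix.mul_assoc,
        ← Matrix.vecMul_vecMul, Matrix.vecMul_transpose]
    rw [key]; exact this
  have hAdet : IsUnit A.det := hA.det_pos.ne'.isUnit
  have hBdet : IsUnit B.det := hB.det_pos.ne'.isUnit
  set C : Matrix (Fin N) (Fin N) ℝ := A⁻¹ - J * B⁻¹ * Jᵀ with hCdef
  -- the target matrix equals C
  have htarget : (Matrix.of fun i j : Fin N =>
      if h : i ∈ s ∧ j ∈ s then
        A⁻¹ i j -
          (A.submatrix ((↑) : {a // a ∈ s} → Fin N) ((↑) : {a // a ∈ s} → Fin N))⁻¹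
            ⟨i, h.1⟩ ⟨j, h.2⟩
      else A⁻¹ i j) = C := by
    ext i j
    have aux : ∀ (k : Fin N) (x : {a // a ∈ s} → ℝ),
        (∑ a : {a // a ∈ s}, (if k = ↑a then (1:ℝ) else 0) * x a) =
          if h : k ∈ s then x ⟨k, h⟩ else 0 := by
      intro k x
      by_cases h : k ∈ s
      · rw [dif_pos h, Finset.sum_eq_single (⟨k, h⟩ : {a // a ∈ s})]
        · simp
        · intro b _ hb
          have : k ≠ ↑b := fun hkb => hb (Subtype.ext hkb.symm)
          simp [this]
        · simp
      · rw [dif_neg h]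
        apply Finset.sum_eq_zero
        intro a _
        have : k ≠ ↑a := fun hk => h (hk ▸ a.2)
        simp [this]
    have hE : (J * B⁻¹ * Jᵀ) i j =
        if h : i ∈ s ∧ j ∈ s then B⁻¹ ⟨i, h.1⟩ ⟨j, h.2⟩ else 0 := by
      have h1 : ∀ b, (J * B⁻¹) i b = if h : i ∈ s then B⁻¹ ⟨i, h⟩ b else 0 := by
        intro b
        rw [Matrix.mul_apply]
        simpa [hJdef, Matrix.one_apply] using aux i (fun a => B⁻¹ a b)
      rw [Matrix.mul_apply]
      simp only [Matrix.transpose_apply, h1]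
      by_cases hi : i ∈ s
      · simp only [dif_pos hi]
        have : (∑ b : {a // a ∈ s}, B⁻¹ ⟨i, hi⟩ b * J j b) =
            ∑ b : {a // a ∈ s}, (if j = ↑b then (1:ℝ) else 0) * B⁻¹ ⟨i, hi⟩ b := by
          refine Finset.sum_congr rfl fun b _ => ?_
          simp [hJdef, he, Matrix.one_apply, mul_comm]
        rw [this, aux j (fun b => B⁻¹ ⟨i, hi⟩ b)]
        by_cases hj : j ∈ s
        · rw [dif_pos hj, dif_pos ⟨hi, hj⟩]
        · rw [dif_neg hj, dif_neg (by tauto)]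
      · simp only [dif_neg hi, zero_mul, Finset.sum_const_zero]
        rw [dif_neg (by tauto)]
    simp only [hCdef, Matrix.sub_apply, hE, Matrix.of_apply]
    split <;> simp [hBdef, he]
  rw [htarget]
  -- C is symmetric
  have hCsymm : Cᴴ = C := by
    have h1 : (A⁻¹).IsHermitian := hA.1.inv
    have h2 : (B⁻¹).IsHermitian := hB.1.inv
    have hJ1 : Jᴴ = Jᵀ := by ext i j; simp [Matrix.conjTranspose_apply]
    have hJ2 : Jᵀᴴ = J := by ext i j; simp [Matrix.conjTranspose_apply]
    simp only [hCdef, conjTranspose_sub, h1, Matrix.conjTranspose_mul,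
      hJ1, hJ2, h1.eq, h2.eq, Matrix.mul_assoc]
  -- C * A * C = C
  have hCAC : C * A * C = C := by
    have hAinv : A * A⁻¹ = 1 := Matrix.mul_nonsing_inv A hAdet
    have hAinv' : A⁻¹ * A = 1 := Matrix.nonsing_inv_mul A hAdet
    have hBinv : B⁻¹ * B = 1 := Matrix.nonsing_inv_mul B hBdet
    have hBinv' : B * B⁻¹ = 1 := Matrix.mul_nonsing_inv B hBdet
    have hEAE : (J * B⁻¹ * Jᵀ) * A * (J * B⁻¹ * Jᵀ) = J * B⁻¹ * Jᵀ := by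
      calc (J * B⁻¹ * Jᵀ) * A * (J * B⁻¹ * Jᵀ)
          = J * B⁻¹ * (Jᵀ * A * J) * (B⁻¹ * Jᵀ) := by
            simp only [Matrix.mul_assoc]
        _ = J * (B⁻¹ * B * B⁻¹) * Jᵀ := by rw [hJAJ]; simp only [Matrix.mul_assoc]
        _ = J * B⁻¹ * Jᵀ := by rw [hBinv, Matrix.one_mul]
    calc C * A * C
        = A⁻¹ * A * A⁻¹ - A⁻¹ * A * (J * B⁻¹ * Jᵀ) - (J * B⁻¹ * Jᵀ) * A * A⁻¹
          + (J * B⁻¹ * Jᵀ) * A * (J * B⁻¹ * Jᵀ) := by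
          simp only [hCdef]; noncomm_ring
      _ = C := by
          rw [hAinv', hEAE, Matrix.one_mul, Matrix.mul_assoc (J * B⁻¹ * Jᵀ) A A⁻¹,
            hAinv, Matrix.mul_one, hCdef]
          rw [Matrix.one_mul]
          abel
  have : (Cᴴ * A * C).PosSemidef := hA.posSemidef.conjTranspose_mul_mul_same C
  rw [hCsymm, hCAC] at this
  exact this
end

section
/- Let K ≥ 1, t_1,…,t_K ≥ 0 with ∑ t_k = 1, λ > 0, and points x_1,…,x_K in ℝ². Define φ(x) = log ∑_{k=1}^K t_k/(1+λ²|x−x_k|²)². Then for almost every x ∈ ℝ² (namely for x distinct from all x_k), the gradient of φ satisfies |∇φ(x)| ≤ min{2λ, 4/min_k |x−x_k|}. -/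
set_option maxHeartbeats 1000000 in
set_option synthInstance.maxHeartbeats 400000 in
theorem stmt10 (K : ℕ) (hK : 0 < K) (t : Fin K → ℝ) (ht : ∀ k, 0 ≤ t k)
    (hsum : ∑ k, t k = 1) (lam : ℝ) (hlam : 0 < lam)
    (x₀ : Fin K → EuclideanSpace ℝ (Fin 2)) :
    ∀ x : EuclideanSpace ℝ (Fin 2), (∀ k, x ≠ x₀ k) →
      ‖gradient (fun y : EuclideanSpace ℝ (Fin 2) =>
          Real.log (∑ k, t k / (1 + lam ^ 2 * ‖y - x₀ k‖ ^ 2) ^ 2)) x‖ ≤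
        min (2 * lam)
          (4 / Finset.univ.inf' (Finset.univ_nonempty_iff.mpr ⟨⟨0, hK⟩⟩)
            (fun k => ‖x - x₀ k‖)) := by
  intro x hx
  set m : ℝ := Finset.univ.inf' (Finset.univ_nonempty_iff.mpr ⟨⟨0, hK⟩⟩)
      (fun k => ‖x - x₀ k‖) with hm_def
  have hmr : ∀ k, m ≤ ‖x - x₀ k‖ := fun k =>
    Finset.inf'_le _ (Finset.mem_univ k)
  have hm0 : 0 < m := by
    obtain ⟨k, -, hk⟩ := Finset.exists_mem_eq_inf' (Finset.univ_nonempty_iff.mpr ⟨⟨0, hK⟩⟩)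
      (fun k => ‖x - x₀ k‖)
    rw [hm_def, hk]
    exact norm_sub_pos_iff.mpr (hx k)
  set g : Fin K → ℝ := fun k => 1 + lam ^ 2 * ‖x - x₀ k‖ ^ 2 with hg_def
  have hg0 : ∀ k, 0 < g k := fun k => by positivity
  set c : Fin K → ℝ := fun k => -(4 * t k * lam ^ 2) / (g k) ^ 3 with hc_def
  -- derivative of each summand
  have hfk : ∀ k : Fin K, HasFDerivAt
      (fun y : EuclideanSpace ℝ (Fin 2) => t k / (1 + lam ^ 2 * ‖y - x₀ k‖ ^ 2) ^ 2)
      (c k • innerSL ℝ (x - x₀ k)) x := by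
    intro k
    have h1 : HasFDerivAt (fun y : EuclideanSpace ℝ (Fin 2) => y - x₀ k)
        (ContinuousLinearMap.id ℝ (EuclideanSpace ℝ (Fin 2))) x :=
      (hasFDerivAt_id x).sub_const _
    have h2 := h1.norm_sq
    have h3 : HasFDerivAt (fun y : EuclideanSpace ℝ (Fin 2) => 1 + lam ^ 2 * ‖y - x₀ k‖ ^ 2)
        ((lam ^ 2) • (2 • (innerSL ℝ (x - x₀ k)).comp
          (ContinuousLinearMap.id ℝ (EuclideanSpace ℝ (Fin 2))))) x :=
      (h2.const_mul (lam ^ 2)).const_add 1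
    have hne : g k ^ 2 ≠ 0 := by have := hg0 k; positivity
    have hscal : HasDerivAt (fun u : ℝ => t k / u ^ 2)
        ((0 * (g k) ^ 2 - t k * (2 * (g k) ^ 1)) / ((g k) ^ 2) ^ 2) (g k) :=
      (hasDerivAt_const (g k) (t k)).div (hasDerivAt_pow 2 (g k)) (by
        have := hg0 k; positivity)
    have h5 := hscal.comp_hasFDerivAt x h3
    refine h5.congr_fderiv ?_
    ext y
    have hgk := hg0 k
    simp only [hc_def, hg_def, ContinuousLinearMap.smul_apply, ContinuousLinearMap.comp_apply,
      ContinuousLinearMap.coe_id', id_eq, ContinuousLinearMap.coe_smul', Pi.smul_apply,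
      smul_eq_mul]
    field_simp
    ring
  -- sum
  set S' : EuclideanSpace ℝ (Fin 2) →L[ℝ] ℝ := ∑ k, c k • innerSL ℝ (x - x₀ k) with hS'_def
  have hS : HasFDerivAt
      (fun y : EuclideanSpace ℝ (Fin 2) =>
        ∑ k, t k / (1 + lam ^ 2 * ‖y - x₀ k‖ ^ 2) ^ 2) S' x :=
    HasFDerivAt.fun_sum (fun k _ => hfk k)
  -- positivity of S x
  set Sx : ℝ := ∑ k, t k / (g k) ^ 2 with hSx_def
  have hSx0 : 0 < Sx := by
    obtain ⟨k, hk⟩ : ∃ k, 0 < t k := by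
      by_contra h
      push_neg at h
      have : ∑ k, t k = 0 := Finset.sum_eq_zero fun k _ => le_antisymm (h k) (ht k)
      simp [this] at hsum
    exact Finset.sum_pos' (fun j _ => div_nonneg (ht j) (by positivity))
      ⟨k, Finset.mem_univ k, div_pos hk (pow_pos (hg0 k) 2)⟩
  have hSxval : (∑ j, t j / (1 + lam ^ 2 * ‖x - x₀ j‖ ^ 2) ^ 2) = Sx := rfl
  have hlog : HasFDerivAt
      (fun y : EuclideanSpace ℝ (Fin 2) =>
        Real.log (∑ k, t k / (1 + lam ^ 2 * ‖y - x₀ k‖ ^ 2) ^ 2))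
      (Sx⁻¹ • S') x := by
    have := hS.log (by rw [hSxval]; exact hSx0.ne')
    rwa [hSxval] at this
  -- gradient norm = fderiv norm
  have hgrad := hlog.hasGradientAt.gradient
  rw [hgrad, LinearIsometryEquiv.norm_map]
  -- bound the norm
  have hbound : ‖S'‖ ≤ min (2 * lam) (4 / m) * Sx := by
    calc ‖S'‖ ≤ ∑ k, ‖c k • innerSL ℝ (x - x₀ k)‖ := norm_sum_le _ _
      _ ≤ ∑ k, min (2 * lam) (4 / m) * (t k / (g k) ^ 2) := by
          refine Finset.sum_le_sum fun k _ => ?_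
          rw [norm_smul (c k) (innerSL ℝ (x - x₀ k)), innerSL_apply_norm, Real.norm_eq_abs]
          have habs : |c k| = 4 * t k * lam ^ 2 / (g k) ^ 3 := by
            rw [hc_def]
            rw [abs_div, abs_neg]
            rw [abs_of_nonneg (by have := ht k; positivity),
              abs_of_nonneg (by have := (hg0 k); positivity)]
          rw [habs]
          set r := ‖x - x₀ k‖ with hr_def
          have hr0 : 0 < r := norm_sub_pos_iff.mpr (hx k)
          have hgk := hg0 k
          have hgeq : g k = 1 + lam ^ 2 * r ^ 2 := rfl
          have htk := ht k
          rw [min_mul_of_nonneg _ _ (div_nonneg htk (by positivity))]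
          have hpos1 : (0:ℝ) ≤ 2 * lam * t k * g k ^ 2 :=
            mul_nonneg (mul_nonneg (by positivity) htk) (by positivity)
          have hpos2 : (0:ℝ) ≤ 4 * t k * g k ^ 2 :=
            mul_nonneg (mul_nonneg (by norm_num) htk) (by positivity)
          refine le_min ?_ ?_
          · have hrhs : 2 * lam * (t k / g k ^ 2) = (2 * lam * t k) / g k ^ 2 := by ring
            rw [div_mul_eq_mul_div, hrhs, div_le_div_iff₀ (by positivity) (by positivity)]
            have key : 2 * lam * r ≤ g k := by
              rw [hgeq]; nlinarith [sq_nonneg (1 - lam * r)]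
            nlinarith [mul_le_mul_of_nonneg_left key hpos1]
          · have hrhs : 4 / m * (t k / g k ^ 2) = (4 * t k) / (m * g k ^ 2) := by
              field_simp
            rw [div_mul_eq_mul_div, hrhs, div_le_div_iff₀ (by positivity) (by positivity)]
            have key : lam ^ 2 * r * m ≤ g k := by
              rw [hgeq]
              nlinarith [hmr k, hr0.le, sq_nonneg lam]
            nlinarith [mul_le_mul_of_nonneg_left key hpos2]
      _ = min (2 * lam) (4 / m) * Sx := by
          rw [hSx_def, Finset.mul_sum]
  calc ‖Sx⁻¹ • S'‖ = Sx⁻¹ * ‖S'‖ := by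
        rw [norm_smul Sx⁻¹ S', Real.norm_eq_abs, abs_of_pos (by positivity)]
    _ ≤ Sx⁻¹ * (min (2 * lam) (4 / m) * Sx) := by
        exact mul_le_mul_of_nonneg_left hbound (by positivity)
    _ = min (2 * lam) (4 / m) := by field_simp
end
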